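/- Let n ≥ m ≥ 1 and k ≥ 1 be integers. If k is odd, then r(S(n,m); k) ≥ kn + m + 2. -/

import Mathlib

set_option maxHeartbeats 1000000


open SimpleGraph

/-- The double star `S(n,m)`: two adjacent centers `0` and `1`, with `n` leaves
attached to `0` (vertices `2,…,n+1`) and `m` leaves attached to `1`
(vertices `n+2,…,n+m+1`). -/
def doubleStar (n m : ℕ) : SimpleGraph (Fin (n + m + 2)) :=
  SimpleGraph.fromRel (fun u v =>
    (u.val = 0 ∧ v.val = 1) ∨
    (u.val = 0 ∧ 2 ≤ v.val ∧ v.val ≤ n + 1) ∨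
    (u.val = 1 ∧ n + 2 ≤ v.val))

/-- The star `K_{1,n}` with center `0` and `n` leaves. -/
def starGraph (n : ℕ) : SimpleGraph (Fin (n + 1)) :=
  SimpleGraph.fromRel (fun u _ => u.val = 0)

/-- The subdivided star `S_n^m`, obtained from `K_{1,n}` by subdividing `m` edges each
exactly once: center `0`; subdivision vertices `1,…,m`; for `1 ≤ i ≤ m` the vertex `m+i`
is the leaf beyond subdivision vertex `i`; vertices `2m+1,…,n+m` are ordinary leaves. -/
def subdividedStar (n m : ℕ) : SimpleGraph (Fin (n + m + 1)) :=
  SimpleGraph.fromRel (fun u v =>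
    (u.val = 0 ∧ 1 ≤ v.val ∧ v.val ≤ m) ∨
    (1 ≤ u.val ∧ u.val ≤ m ∧ v.val = u.val + m) ∨
    (u.val = 0 ∧ 2 * m + 1 ≤ v.val))

/-- `K_N` colored by `c` with `k` colors contains a monochromatic copy of `H`. -/
def HasMonoCopy {W : Type} (H : SimpleGraph W) {N : ℕ} {α : Type}
    (c : Sym2 (Fin N) → α) : Prop :=
  ∃ (f : W ↪ Fin N) (i : α), ∀ v w : W, H.Adj v w → c s(f v, f w) = i

/-- Every `k`-coloring of the edges of `K_N` contains a monochromatic copy of `H`. -/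
def IsRamsey {W : Type} (H : SimpleGraph W) (k N : ℕ) : Prop :=
  ∀ c : Sym2 (Fin N) → Fin k, HasMonoCopy H c

/-- The `k`-color Ramsey number of `H`. -/
noncomputable def ramseyNumber {W : Type} (H : SimpleGraph W) (k : ℕ) : ℕ :=
  sInf {N | IsRamsey H k N}

/-- There is a list assignment of `k` colors to each edge of `K_N` such that every
coloring from the lists contains a monochromatic copy of `H`. -/
def IsListRamsey {W : Type} (H : SimpleGraph W) (k N : ℕ) : Prop :=
  ∃ L : Sym2 (Fin N) → Finset ℕ, (∀ e, (L e).card = k) ∧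
    ∀ c : Sym2 (Fin N) → ℕ, (∀ e, c e ∈ L e) → HasMonoCopy H c

/-- The `k`-color list Ramsey number of `H`. -/
noncomputable def listRamseyNumber {W : Type} (H : SimpleGraph W) (k : ℕ) : ℕ :=
  sInf {N | IsListRamsey H k N}



-- the underlying symmetric color function
def colFun (n k : ℕ) (u v : ℕ) : ℕ :=
  if u < k*n then
    (if v < k*n then (u/n + v/n) % k else (2*(u/n)) % k)
  else if v < k*n then (2*(v/n)) % k else 0

lemma colFun_comm (n k u v : ℕ) : colFun n k u v = colFun n k v u := by
  unfold colFun; split_ifs <;> simp [Nat.add_comm]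

lemma colFun_lt (n k u v : ℕ) (hk : 0 < k) : colFun n k u v < k := by
  unfold colFun; split_ifs <;> first | exact Nat.mod_lt _ hk | exact hk

def lowerCol (n m k : ℕ) (hk : 0 < k) : Sym2 (Fin (k*n+m+1)) → Fin k :=
  Sym2.lift ⟨fun u v => ⟨colFun n k u.val v.val, colFun_lt n k _ _ hk⟩,
    fun u v => by simp only [Fin.mk.injEq]; exact colFun_comm n k u.val v.val⟩

lemma lowerCol_eq (n m k : ℕ) (hk : 0 < k) (u v : Fin (k*n+m+1)) :
    lowerCol n m k hk s(u, v) = ⟨colFun n k u.val v.val, colFun_lt n k _ _ hk⟩ := rfl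

-- cancellation lemmas
lemma add_cancel_mod (k t b b' : ℕ) (hb : b < k) (hb' : b' < k)
    (h : (t + b) % k = (t + b') % k) : b = b' := by
  have h2 : b ≡ b' [MOD k] := Nat.ModEq.add_left_cancel' t h
  calc b = b % k := (Nat.mod_eq_of_lt hb).symm
    _ = b' % k := h2
    _ = b' := Nat.mod_eq_of_lt hb'

lemma two_cancel_mod (k b b' : ℕ) (hodd : Odd k) (hb : b < k) (hb' : b' < k)
    (h : (2*b) % k = (2*b') % k) : b = b' := by
  have hco : Nat.Coprime 2 k := hodd.coprime_two_left
  have h2 : b ≡ b' [MOD k] := Nat.ModEq.cancel_left_of_coprime (Nat.coprime_comm.mp hco) h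
  calc b = b % k := (Nat.mod_eq_of_lt hb).symm
    _ = b' % k := h2
    _ = b' := Nat.mod_eq_of_lt hb'

lemma no_mono_lower (n m k : ℕ) (hnm : m ≤ n) (hm : 1 ≤ m) (hk : 1 ≤ k) (hodd : Odd k) :
    ¬ HasMonoCopy (doubleStar n m) (lowerCol n m k hk) := by
  have hn : 0 < n := le_trans hm hnm
  rintro ⟨f, i, hf⟩
  have hb0 : 0 < n+m+2 := by omega
  have hb1 : 1 < n+m+2 := by omega
  have hdl : ∀ x : ℕ, x < k*n → x / n < k := by
    intro x hx
    apply Nat.div_lt_of_lt_mul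
    rw [Nat.mul_comm n k]; exact hx
  set a : ℕ := (i.val * ((k+1)/2)) % k with ha_def
  have ha : a < k := Nat.mod_lt _ hk
  have h2a : (2*a) % k = i.val := by
    have e1 : (2*a) % k = (2*(i.val * ((k+1)/2))) % k :=
      (Nat.mod_modEq _ k).mul_left 2
    have e2 : 2*(i.val * ((k+1)/2)) = i.val * k + i.val := by
      have hx : 2*((k+1)/2) = k+1 := by
        obtain ⟨t, ht⟩ := hodd; omega
      calc 2*(i.val*((k+1)/2)) = i.val*(2*((k+1)/2)) := by ring
        _ = i.val*(k+1) := by rw [hx]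
        _ = i.val*k + i.val := by ring
    rw [e1, e2, Nat.add_comm, Nat.add_mul_mod_self_right]
    exact Nat.mod_eq_of_lt i.isLt
  have hcol : ∀ x y : Fin (k*n+m+1), lowerCol n m k hk s(x,y) = i →
      colFun n k x.val y.val = i.val := by
    intro x y h
    rw [lowerCol_eq] at h
    exact congrArg Fin.val h
  -- closure of the small set under colored edges
  have hS : ∀ x y : Fin (k*n+m+1), (k*n ≤ x.val ∨ x.val / n = a) →
      colFun n k x.val y.val = i.val → (k*n ≤ y.val ∨ y.val / n = a) := by
    intro x y hx hc
    by_cases hy : k*n ≤ y.val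
    · exact Or.inl hy
    push_neg at hy
    right
    have hyk : y.val / n < k := hdl _ hy
    rcases hx with hx | hx
    · unfold colFun at hc
      rw [if_neg (by omega), if_pos (by omega)] at hc
      exact two_cancel_mod k _ a hodd hyk ha (by rw [hc, h2a])
    · have hxlt : x.val < k*n := by
        by_contra h
        push_neg at h
        have : k ≤ x.val / n := (Nat.le_div_iff_mul_le hn).mpr h
        omega
      unfold colFun at hc
      rw [if_pos hxlt, if_pos (by omega), hx] at hc
      refine add_cancel_mod k a _ a hyk ha ?_
      rw [hc, ← h2a]; ring_nf
  -- adjacency facts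
  have adj0j : ∀ j, ∀ h1 : 1 ≤ j, ∀ hj : j ≤ n+1,
      (doubleStar n m).Adj ⟨0, hb0⟩ ⟨j, by omega⟩ := by
    intro j h1 hj
    rw [doubleStar, SimpleGraph.fromRel_adj]
    refine ⟨by intro hEq; rw [Fin.mk.injEq] at hEq; omega, Or.inl ?_⟩
    by_cases hj1 : j = 1
    · exact Or.inl ⟨rfl, hj1⟩
    · exact Or.inr (Or.inl ⟨rfl, show 2 ≤ j by omega, hj⟩)
  have adj1j : ∀ j, ∀ hj : n+2 ≤ j, ∀ hj2 : j < n+m+2,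
      (doubleStar n m).Adj ⟨1, hb1⟩ ⟨j, hj2⟩ := by
    intro j hj hj2
    rw [doubleStar, SimpleGraph.fromRel_adj]
    exact ⟨by intro hEq; rw [Fin.mk.injEq] at hEq; omega, Or.inl (Or.inr (Or.inr ⟨rfl, hj⟩))⟩
  have adj01 : (doubleStar n m).Adj ⟨0, hb0⟩ ⟨1, hb1⟩ := adj0j 1 le_rfl (by omega)
  by_cases hP0 : k*n ≤ (f ⟨0, hb0⟩).val ∨ (f ⟨0, hb0⟩).val / n = a
  · -- all images lie in the small closed set of size n+m+1
    have hP1 : k*n ≤ (f ⟨1, hb1⟩).val ∨ (f ⟨1, hb1⟩).val / n = a :=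
      hS _ _ hP0 (hcol _ _ (hf _ _ adj01))
    have hP : ∀ j : Fin (n+m+2), k*n ≤ (f j).val ∨ (f j).val / n = a := by
      intro j
      by_cases hj0 : j.val = 0
      · have hfj : f j = f ⟨0, hb0⟩ := congrArg f (Fin.ext hj0)
        rw [hfj]; exact hP0
      by_cases hjn : j.val ≤ n+1
      · exact hS _ _ hP0 (hcol _ _ (hf _ _ (adj0j j.val (by omega) hjn)))
      · exact hS _ _ hP1 (hcol _ _ (hf _ _ (adj1j j.val (by omega) j.isLt)))
    set g : Fin (n+m+2) → Fin (n+m+1) := fun j =>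
      if k*n ≤ (f j).val then ⟨(f j).val - k*n + n, by have := (f j).isLt; omega⟩
      else ⟨(f j).val % n, lt_of_lt_of_le (Nat.mod_lt _ hn) (by omega)⟩ with hg
    have hginj : Function.Injective g := by
      intro j1 j2 h
      apply f.injective
      apply Fin.ext
      rw [hg] at h
      simp only at h
      split_ifs at h with h1 h2 h2 <;> rw [Fin.mk.injEq] at h
      · omega
      · exfalso; have := Nat.mod_lt (f j2).val hn; omega
      · exfalso; have := Nat.mod_lt (f j1).val hn; omega
      · have hd1 := Nat.div_add_mod (f j1).val n
        have hd2 := Nat.div_add_mod (f j2).val n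
        rw [(hP j1).resolve_left h1] at hd1
        rw [(hP j2).resolve_left h2] at hd2
        rw [← hd1, ← hd2, h]
    have := Fintype.card_le_of_injective g hginj
    simp only [Fintype.card_fin] at this
    omega
  · -- pigeonhole case
    push_neg at hP0
    obtain ⟨hP0a, hP0b⟩ := hP0
    set b : ℕ := (f ⟨0, hb0⟩).val / n with hb_def
    have hbk : b < k := hdl _ hP0a
    have hbne : (2*b) % k ≠ i.val := by
      intro h
      exact hP0b (two_cancel_mod k b a hodd hbk ha (by rw [h, h2a]))
    have hkey : ∀ j : Fin (n+m+2), 1 ≤ j.val → j.val ≤ n+1 →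
        (f j).val < k*n ∧ (b + (f j).val / n) % k = i.val := by
      intro j hj1 hjn
      have hc : colFun n k (f ⟨0, hb0⟩).val (f j).val = i.val :=
        hcol _ _ (hf _ _ (adj0j j.val hj1 hjn))
      have hflt : (f j).val < k*n := by
        by_contra h
        push_neg at h
        unfold colFun at hc
        rw [if_pos (by omega), if_neg (by omega)] at hc
        exact hbne hc
      refine ⟨hflt, ?_⟩
      unfold colFun at hc
      rw [if_pos (by omega), if_pos hflt] at hc
      exact hc
    obtain ⟨b', hb'_def⟩ : ∃ x, (f ⟨1, hb1⟩).val / n = x := ⟨_, rfl⟩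
    have hall : ∀ j : Fin (n+m+2), 1 ≤ j.val → j.val ≤ n+1 → (f j).val / n = b' := by
      intro j hj1 hjn
      obtain ⟨hflt, hc⟩ := hkey j hj1 hjn
      obtain ⟨hflt', hc'⟩ := hkey ⟨1, hb1⟩ (by exact le_refl 1) (by exact Nat.le_add_left 1 n)
      exact add_cancel_mod k b _ _ (hdl _ hflt) (hdl _ hflt') (by rw [hc, hc'])
      |>.trans hb'_def
    have hginj : Function.Injective (fun t : Fin (n+1) =>
        (⟨(f ⟨t.val+1, by omega⟩).val % n, Nat.mod_lt _ hn⟩ : Fin n)) := by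
      intro t1 t2 h
      simp only [Fin.mk.injEq] at h
      have hbt1 : t1.val+1 < n+m+2 := by omega
      have hbt2 : t2.val+1 < n+m+2 := by omega
      have hd1 := Nat.div_add_mod (f ⟨t1.val+1, hbt1⟩).val n
      have hd2 := Nat.div_add_mod (f ⟨t2.val+1, hbt2⟩).val n
      have e1 := hall ⟨t1.val+1, hbt1⟩ (by exact Nat.le_add_left 1 t1.val) (by exact Nat.succ_le_succ (Nat.le_of_lt_succ t1.isLt))
      have e2 := hall ⟨t2.val+1, hbt2⟩ (by exact Nat.le_add_left 1 t2.val) (by exact Nat.succ_le_succ (Nat.le_of_lt_succ t2.isLt))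
      rw [e1] at hd1
      rw [e2] at hd2
      have hv : (f ⟨t1.val+1, hbt1⟩).val = (f ⟨t2.val+1, hbt2⟩).val := by
        rw [← hd1, ← hd2, h]
      have := f.injective (Fin.ext hv)
      rw [Fin.mk.injEq] at this
      exact Fin.ext (by omega)
    have := Fintype.card_le_of_injective _ hginj
    simp only [Fintype.card_fin] at this
    omega

def cdeg {N k : ℕ} (c : Sym2 (Fin N) → Fin k) (i : Fin k) (v : Fin N) : ℕ :=
  (Finset.univ.filter fun u => u ≠ v ∧ c s(v,u) = i).card

lemma mono_of_centers {N k : ℕ} (n m : ℕ) (c : Sym2 (Fin N) → Fin k) (i : Fin k)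
    (v u : Fin N) (hne : u ≠ v) (hc : c s(v,u) = i)
    (hv : n+m+1 ≤ cdeg c i v) (hu : m+1 ≤ cdeg c i u) :
    HasMonoCopy (doubleStar n m) c := by
  classical
  set Nv := Finset.univ.filter (fun w => w ≠ v ∧ c s(v,w) = i) with hNv
  set Nu := Finset.univ.filter (fun w => w ≠ u ∧ c s(u,w) = i) with hNu
  have hvNu : v ∈ Nu := by
    rw [hNu, Finset.mem_filter]
    refine ⟨Finset.mem_univ _, fun h => hne h.symm, ?_⟩
    rw [Sym2.eq_swap]; exact hc
  have hcardNu : m ≤ (Nu.erase v).card := by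
    rw [Finset.card_erase_of_mem hvNu]
    have : m+1 ≤ Nu.card := hu
    omega
  obtain ⟨B, hBsub, hBcard⟩ := Finset.exists_subset_card_eq hcardNu
  have hcardA : n ≤ (Nv \ insert u B).card := by
    have h1 := Finset.le_card_sdiff (insert u B) Nv
    have h2 : (insert u B).card ≤ m + 1 := by
      have := Finset.card_insert_le u B
      omega
    have h3 : n+m+1 ≤ Nv.card := hv
    omega
  obtain ⟨A, hAsub, hAcard⟩ := Finset.exists_subset_card_eq hcardA
  have hAv : ∀ x ∈ A, x ≠ v ∧ c s(v,x) = i ∧ x ≠ u ∧ x ∉ B := by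
    intro x hx
    have h1 := hAsub hx
    rw [Finset.mem_sdiff, Finset.mem_insert] at h1
    rw [hNv, Finset.mem_filter] at h1
    exact ⟨h1.1.2.1, h1.1.2.2, fun h => h1.2 (Or.inl h), fun h => h1.2 (Or.inr h)⟩
  have hBu : ∀ x ∈ B, x ≠ u ∧ c s(u,x) = i ∧ x ≠ v := by
    intro x hx
    have h1 := hBsub hx
    rw [Finset.mem_erase] at h1
    have h2 := h1.2
    rw [hNu, Finset.mem_filter] at h2
    exact ⟨h2.2.1, h2.2.2, h1.1⟩
  set eA := A.orderIsoOfFin hAcard with heA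
  set eB := B.orderIsoOfFin hBcard with heB
  set F : Fin (n+m+2) → Fin N := fun j =>
    if hj0 : j.val = 0 then v
    else if hj1 : j.val = 1 then u
    else if hj2 : j.val < n+2 then (eA ⟨j.val - 2, by omega⟩ : Fin N)
    else (eB ⟨j.val - (n+2), by omega⟩ : Fin N) with hF
  have hF0 : ∀ j : Fin (n+m+2), j.val = 0 → F j = v := by
    intro j h; rw [hF]; simp only; rw [dif_pos h]
  have hF1 : ∀ j : Fin (n+m+2), j.val = 1 → F j = u := by
    intro j h; rw [hF]; simp only; rw [dif_neg (by omega), dif_pos h]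
  have hFA : ∀ j : Fin (n+m+2), ∀ h2 : 2 ≤ j.val, ∀ hj : j.val ≤ n+1,
      F j = (eA ⟨j.val - 2, by omega⟩ : Fin N) := by
    intro j h2 hj; rw [hF]; simp only
    rw [dif_neg (by omega), dif_neg (by omega), dif_pos (by omega)]
  have hFB : ∀ j : Fin (n+m+2), ∀ hj : n+2 ≤ j.val,
      F j = (eB ⟨j.val - (n+2), by omega⟩ : Fin N) := by
    intro j hj; rw [hF]; simp only
    have hjm := j.isLt
    rw [dif_neg (by omega), dif_neg (by omega), dif_neg (by omega)]
  have hFinj : Function.Injective F := by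
    intro j1 j2 hEq
    by_contra hne12
    have hvne : j1.val ≠ j2.val := fun h => hne12 (Fin.ext h)
    have reg : ∀ j : Fin (n+m+2), j.val = 0 ∨ j.val = 1 ∨
        (2 ≤ j.val ∧ j.val ≤ n+1) ∨ (n+2 ≤ j.val) := by
      intro j; omega
    rcases reg j1 with h1|h1|h1|h1 <;> rcases reg j2 with h2|h2|h2|h2
    · omega
    · rw [hF0 j1 h1, hF1 j2 h2] at hEq; exact hne hEq.symm
    · rw [hF0 j1 h1, hFA j2 h2.1 h2.2] at hEq
      exact (hAv _ (Subtype.coe_prop _)).1 hEq.symm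
    · rw [hF0 j1 h1, hFB j2 h2] at hEq
      exact (hBu _ (Subtype.coe_prop _)).2.2 hEq.symm
    · rw [hF1 j1 h1, hF0 j2 h2] at hEq; exact hne hEq
    · omega
    · rw [hF1 j1 h1, hFA j2 h2.1 h2.2] at hEq
      exact (hAv _ (Subtype.coe_prop _)).2.2.1 hEq.symm
    · rw [hF1 j1 h1, hFB j2 h2] at hEq
      exact (hBu _ (Subtype.coe_prop _)).1 hEq.symm
    · rw [hFA j1 h1.1 h1.2, hF0 j2 h2] at hEq
      exact (hAv _ (Subtype.coe_prop _)).1 hEq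
    · rw [hFA j1 h1.1 h1.2, hF1 j2 h2] at hEq
      exact (hAv _ (Subtype.coe_prop _)).2.2.1 hEq
    · rw [hFA j1 h1.1 h1.2, hFA j2 h2.1 h2.2] at hEq
      have := eA.injective (Subtype.ext hEq)
      rw [Fin.mk.injEq] at this
      omega
    · rw [hFA j1 h1.1 h1.2, hFB j2 h2] at hEq
      exact (hAv _ (Subtype.coe_prop _)).2.2.2 (by rw [hEq]; exact Subtype.coe_prop _)
    · rw [hFB j1 h1, hF0 j2 h2] at hEq
      exact (hBu _ (Subtype.coe_prop _)).2.2 hEq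
    · rw [hFB j1 h1, hF1 j2 h2] at hEq
      exact (hBu _ (Subtype.coe_prop _)).1 hEq
    · rw [hFB j1 h1, hFA j2 h2.1 h2.2] at hEq
      exact (hAv _ (Subtype.coe_prop _)).2.2.2 (by rw [← hEq]; exact Subtype.coe_prop _)
    · rw [hFB j1 h1, hFB j2 h2] at hEq
      have := eB.injective (Subtype.ext hEq)
      rw [Fin.mk.injEq] at this
      omega
  refine ⟨⟨F, hFinj⟩, i, ?_⟩
  intro x y hadj
  rw [doubleStar, SimpleGraph.fromRel_adj] at hadj
  obtain ⟨hxy, hrel⟩ := hadj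
  simp only [Function.Embedding.coeFn_mk]
  rcases hrel with (⟨hx,hy⟩|⟨hx,hy⟩|⟨hx,hy⟩)|(⟨hy,hx⟩|⟨hy,hx⟩|⟨hy,hx⟩)
  · rw [hF0 x hx, hF1 y hy]; exact hc
  · rw [hF0 x hx, hFA y hy.1 hy.2]
    exact (hAv _ (Subtype.coe_prop _)).2.1
  · rw [hF1 x hx, hFB y hy]
    exact (hBu _ (Subtype.coe_prop _)).2.1
  · rw [hF0 y hy, hF1 x hx, Sym2.eq_swap]; exact hc
  · rw [hF0 y hy, hFA x hx.1 hx.2, Sym2.eq_swap]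
    exact (hAv _ (Subtype.coe_prop _)).2.1
  · rw [hF1 y hy, hFB x hx, Sym2.eq_swap]
    exact (hBu _ (Subtype.coe_prop _)).2.1

lemma exists_big_fiber (k M : ℕ) (hk : 0 < k) (hM : 0 < M) (g : Fin M → Fin k) :
    ∃ i, M ≤ k * (Finset.univ.filter fun v => g v = i).card := by
  by_contra h
  push_neg at h
  have hfib : ∑ i : Fin k, (Finset.univ.filter fun v => g v = i).card = M := by
    rw [← Finset.card_eq_sum_card_fiberwise (fun x _ => Finset.mem_univ (g x)),
      Finset.card_univ, Fintype.card_fin]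
  have h3 : ∑ i : Fin k, k * (Finset.univ.filter fun v => g v = i).card ≤ k * (M-1) := by
    calc ∑ i : Fin k, k * (Finset.univ.filter fun v => g v = i).card
        ≤ ∑ _i : Fin k, (M-1) := Finset.sum_le_sum (fun i _ => by have := h i; omega)
      _ = k*(M-1) := by rw [Finset.sum_const, Finset.card_univ, Fintype.card_fin, smul_eq_mul]
  rw [← Finset.mul_sum, hfib] at h3
  have h4 : M ≤ M - 1 := Nat.le_of_mul_le_mul_left h3 hk
  omega

lemma isRamsey_big (n m k : ℕ) (hk : 1 ≤ k) :
    IsRamsey (doubleStar n m) k (k*k*(n+m+2)+2) := by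
  classical
  intro c
  by_contra hno
  have hwin : ∀ (i : Fin k) (v u : Fin (k*k*(n+m+2)+2)), u ≠ v → c s(v,u) = i →
      n+m+1 ≤ cdeg c i v → m+1 ≤ cdeg c i u → False :=
    fun i v u h1 h2 h3 h4 => hno (mono_of_centers n m c i v u h1 h2 h3 h4)
  have hsum : ∀ v, ∑ i : Fin k, cdeg c i v = k*k*(n+m+2)+1 := by
    intro v
    have h1 : (Finset.univ.filter fun u => u ≠ v).card = k*k*(n+m+2)+1 := by
      rw [Finset.filter_ne', Finset.card_erase_of_mem (Finset.mem_univ v),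
        Finset.card_univ, Fintype.card_fin]
      omega
    calc ∑ i : Fin k, cdeg c i v
        = ∑ i : Fin k, ((Finset.univ.filter fun u => u ≠ v).filter fun u => c s(v,u) = i).card := by
          simp only [cdeg, Finset.filter_filter]
      _ = (Finset.univ.filter fun u => u ≠ v).card :=
          (Finset.card_eq_sum_card_fiberwise (fun x _ => Finset.mem_univ _)).symm
      _ = k*k*(n+m+2)+1 := h1
  have hmaj : ∀ v, ∃ i, k*(n+m+2) ≤ cdeg c i v := by
    intro v
    by_contra h
    push_neg at h
    have h2 : ∑ i : Fin k, (cdeg c i v + 1) ≤ ∑ _i : Fin k, k*(n+m+2) :=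
      Finset.sum_le_sum (fun i _ => h i)
    rw [Finset.sum_add_distrib, hsum v] at h2
    simp only [Finset.sum_const, Finset.card_univ, Fintype.card_fin, smul_eq_mul,
      Nat.mul_one] at h2
    rw [← Nat.mul_assoc] at h2
    omega
  choose iv hiv using hmaj
  obtain ⟨i, hT⟩ := exists_big_fiber k (k*k*(n+m+2)+2) (by omega) (by omega) iv
  set T := Finset.univ.filter fun v => iv v = i with hTdef
  have hTdeg : ∀ v ∈ T, k*(n+m+2) ≤ cdeg c i v := by
    intro v hv
    rw [hTdef, Finset.mem_filter] at hv
    rw [← hv.2]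
    exact hiv v
  have hsmall : ∀ v ∈ T, ∀ u, u ≠ v → c s(v,u) = i → cdeg c i u ≤ m := by
    intro v hvT u hne hcv
    by_contra h
    push_neg at h
    refine hwin i v u hne hcv (le_trans ?_ (hTdeg v hvT)) h
    calc n+m+1 ≤ n+m+2 := by omega
      _ ≤ k*(n+m+2) := Nat.le_mul_of_pos_left _ hk
  set S := (T ×ˢ (Finset.univ : Finset (Fin (k*k*(n+m+2)+2)))).filter
    (fun p => p.2 ≠ p.1 ∧ c s(p.1,p.2) = i) with hSdef
  have hS1 : S.card = ∑ v ∈ T, cdeg c i v := by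
    rw [hSdef, Finset.card_eq_sum_card_fiberwise (f := Prod.fst) (t := T)
      (fun p hp => by
        rw [Finset.mem_coe, Finset.mem_filter, Finset.mem_product] at hp
        exact hp.1.1)]
    apply Finset.sum_congr rfl
    intro v hvT
    have hfibeq : (((T ×ˢ (Finset.univ : Finset (Fin (k*k*(n+m+2)+2)))).filter
        (fun p => p.2 ≠ p.1 ∧ c s(p.1,p.2) = i)).filter (fun p => p.1 = v)) =
        ({v} : Finset _) ×ˢ (Finset.univ.filter fun u => u ≠ v ∧ c s(v,u) = i) := by
      ext p
      obtain ⟨p1, p2⟩ := p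
      simp only [Finset.mem_filter, Finset.mem_product, Finset.mem_singleton,
        Finset.mem_univ, true_and]
      constructor
      · rintro ⟨⟨⟨hpT, -⟩, hne, hcc⟩, hp1⟩
        subst hp1
        exact ⟨rfl, hne, hcc⟩
      · rintro ⟨hp1, hne, hcc⟩
        subst hp1
        exact ⟨⟨⟨hvT, trivial⟩, hne, hcc⟩, rfl⟩
    rw [hfibeq, Finset.card_product, Finset.card_singleton, Nat.one_mul]
    rfl
  have hS2 : S.card ≤ (k*k*(n+m+2)+2) * m := by
    rw [hSdef, Finset.card_eq_sum_card_fiberwise (f := Prod.snd)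
      (t := (Finset.univ : Finset (Fin (k*k*(n+m+2)+2)))) (fun p _ => Finset.mem_univ _)]
    calc ∑ u : Fin (k*k*(n+m+2)+2), (((T ×ˢ Finset.univ).filter
          (fun p => p.2 ≠ p.1 ∧ c s(p.1,p.2) = i)).filter (fun p => p.2 = u)).card
        ≤ ∑ _u : Fin (k*k*(n+m+2)+2), m := by
          apply Finset.sum_le_sum
          intro u _
          by_cases hne : (((T ×ˢ Finset.univ).filter
              (fun p => p.2 ≠ p.1 ∧ c s(p.1,p.2) = i)).filter (fun p => p.2 = u)).Nonempty
          · obtain ⟨p, hp⟩ := hne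
            rw [Finset.mem_filter, Finset.mem_filter, Finset.mem_product] at hp
            obtain ⟨⟨⟨hpT, -⟩, hpne, hpc⟩, hp2⟩ := hp
            have hdu : cdeg c i u ≤ m := by
              apply hsmall p.1 hpT u (by rw [← hp2]; exact hpne) (by rw [← hp2]; exact hpc)
            refine le_trans ?_ hdu
            apply Finset.card_le_card_of_injOn (fun p => p.1)
            · intro q hq
              rw [Finset.mem_coe, Finset.mem_filter, Finset.mem_filter, Finset.mem_product] at hq
              obtain ⟨⟨⟨hqT, -⟩, hqne, hqc⟩, hq2⟩ := hq
              rw [Finset.mem_coe, Finset.mem_filter]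
              refine ⟨Finset.mem_univ _, ?_, ?_⟩
              · rw [← hq2]; exact fun hh => hqne hh.symm
              · rw [Sym2.eq_swap, ← hq2]; exact hqc
            · intro q1 hq1 q2 hq2 hqq
              rw [Finset.mem_coe, Finset.mem_filter] at hq1 hq2
              have : q1.2 = q2.2 := by rw [hq1.2, hq2.2]
              exact Prod.ext hqq this
          · rw [Finset.not_nonempty_iff_eq_empty] at hne
            rw [hne, Finset.card_empty]
            omega
      _ = (k*k*(n+m+2)+2) * m := by
          rw [Finset.sum_const, Finset.card_univ, Fintype.card_fin, smul_eq_mul]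
  have hS3 : T.card * (k*(n+m+2)) ≤ S.card := by
    rw [hS1]
    have := Finset.card_nsmul_le_sum T (fun v => cdeg c i v) (k*(n+m+2)) hTdeg
    rwa [smul_eq_mul] at this
  have hfinal : T.card * (k*(n+m+2)) ≤ (k*k*(n+m+2)+2) * m := le_trans hS3 hS2
  have h5 : (k*k*(n+m+2)+2) * (n+m+2) ≤ (k * T.card) * (n+m+2) :=
    Nat.mul_le_mul_right _ hT
  have h6 : (k*T.card)*(n+m+2) = T.card * (k*(n+m+2)) := by ring
  have h7 : (k*k*(n+m+2)+2)*(n+m+2) ≤ (k*k*(n+m+2)+2) * m := by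
    calc (k*k*(n+m+2)+2)*(n+m+2) ≤ (k*T.card)*(n+m+2) := h5
      _ = T.card * (k*(n+m+2)) := h6
      _ ≤ (k*k*(n+m+2)+2) * m := hfinal
  have h8 : n+m+2 ≤ m := by
    have hpos : 0 < k*k*(n+m+2)+2 := by omega
    rw [Nat.mul_comm (k*k*(n+m+2)+2) (n+m+2), Nat.mul_comm (k*k*(n+m+2)+2) m] at h7
    exact Nat.le_of_mul_le_mul_right h7 hpos
  omega

/-- If `n ≥ m ≥ 1`, `k ≥ 1` and `k` is odd, then `r(S(n,m); k) ≥ kn + m + 2`. -/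
theorem stmt_3 (n m k : ℕ) (hnm : m ≤ n) (hm : 1 ≤ m) (hk : 1 ≤ k) (hodd : Odd k) :
    ramseyNumber (doubleStar n m) k ≥ k * n + m + 2 := by
  have hn : 0 < n := le_trans hm hnm
  apply le_csInf
  · exact ⟨k*k*(n+m+2)+2, isRamsey_big n m k hk⟩
  · intro N hN
    by_contra hlt
    push_neg at hlt
    have hle : N ≤ k*n+m+1 := by omega
    obtain ⟨f, i, hf⟩ := hN (fun p => lowerCol n m k hk (p.map (Fin.castLEEmb hle)))
    apply no_mono_lower n m k hnm hm hk hodd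
    refine ⟨f.trans (Fin.castLEEmb hle), i, ?_⟩
    intro v w hadj
    have h1 := hf v w hadj
    simp only [Sym2.map_pair_eq] at h1
    exact h1
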